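/- Let z = (x,…,x, y) be a consensus critical point of g(z) = Σ_j (f_j(x^j, y_j) + Σ_i w_{ji}‖x^j − x^i‖²). If (x, y) is a strict saddle of f(x,y) = Σ_j f_j(x, y_j) (i.e., the Hessian of f at (x,y) has a negative eigenvalue), then z is a strict saddle of g. -/

import Mathlib

set_option maxHeartbeats 1000000
set_option synthInstance.maxHeartbeats 400000


/-- Let `z = (x,…,x,y)` be a consensus critical point of
`g(z) = Σ_j (f_j(x^j,y_j) + Σ_i w_{ji}‖x^j − x^i‖²)`.  If `(x,y)` is a strict saddle of
`f(x,y) = Σ_j f_j(x,y_j)` (the Hessian of `f` at `(x,y)` has a negative direction), then `z`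
is a strict saddle of `g`. -/
theorem strict_saddle_of_f_gives_strict_saddle_of_g
    (J n : ℕ) (m : Fin J → ℕ)
    (f : ∀ j : Fin J,
      WithLp 2 (EuclideanSpace ℝ (Fin n) × EuclideanSpace ℝ (Fin (m j))) → ℝ)
    (hf : ∀ j, ContDiff ℝ 2 (f j))
    (W : Fin J → Fin J → ℝ)
    (hWnonneg : ∀ i j, 0 ≤ W i j)
    (g : WithLp 2 ((PiLp 2 fun _ : Fin J => EuclideanSpace ℝ (Fin n)) ×
          (PiLp 2 fun j : Fin J => EuclideanSpace ℝ (Fin (m j)))) → ℝ)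
    (hg : ∀ z, g z = ∑ j, (f j ((WithLp.equiv 2 _).symm (z.ofLp.1 j, z.ofLp.2 j))
          + ∑ i, W j i * ‖z.ofLp.1 j - z.ofLp.1 i‖ ^ 2))
    (F : WithLp 2 (EuclideanSpace ℝ (Fin n) ×
          (PiLp 2 fun j : Fin J => EuclideanSpace ℝ (Fin (m j)))) → ℝ)
    (hF : ∀ p, F p = ∑ j, f j ((WithLp.equiv 2 _).symm (p.ofLp.1, p.ofLp.2 j)))
    (z : WithLp 2 ((PiLp 2 fun _ : Fin J => EuclideanSpace ℝ (Fin n)) ×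
          (PiLp 2 fun j : Fin J => EuclideanSpace ℝ (Fin (m j)))))
    (x : EuclideanSpace ℝ (Fin n))
    (hcons : ∀ j, z.ofLp.1 j = x)
    -- z is a critical point of g
    (hcrit : fderiv ℝ g z = 0)
    -- (x, y) is a strict saddle of f: critical with a negative Hessian direction
    (hFcrit : fderiv ℝ F ((WithLp.equiv 2 _).symm (x, z.ofLp.2)) = 0)
    (hFsaddle : ∃ q, fderiv ℝ (fderiv ℝ F) ((WithLp.equiv 2 _).symm (x, z.ofLp.2)) q q < 0) :
    -- then z is a strict saddle of g
    ∃ q, fderiv ℝ (fderiv ℝ g) z q q < 0 := by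
  classical
  -- the consensus embedding
  let Lm : WithLp 2 (EuclideanSpace ℝ (Fin n) ×
          (PiLp 2 fun j : Fin J => EuclideanSpace ℝ (Fin (m j)))) →ₗ[ℝ]
        WithLp 2 ((PiLp 2 fun _ : Fin J => EuclideanSpace ℝ (Fin n)) ×
          (PiLp 2 fun j : Fin J => EuclideanSpace ℝ (Fin (m j)))) :=
    { toFun := fun p => WithLp.toLp 2 (WithLp.toLp 2 (fun _ => p.ofLp.1), p.ofLp.2)
      map_add' := fun p q => rfl
      map_smul' := fun c p => rfl }
  let L := LinearMap.toContinuousLinearMap Lm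
  have hLapp : ∀ p, (L p).ofLp.1 = WithLp.toLp 2 (fun _ => p.ofLp.1) ∧ (L p).ofLp.2 = p.ofLp.2 := fun p => ⟨rfl, rfl⟩
  -- F = g ∘ L
  have hFgL : F = g ∘ L := by
    funext p
    rw [hF, Function.comp_apply, hg]
    refine Finset.sum_congr rfl fun j _ => ?_
    have h1 : (L p).ofLp.1 = WithLp.toLp 2 (fun _ => p.ofLp.1) := rfl
    have h2 : (L p).ofLp.2 = p.ofLp.2 := rfl
    rw [h1, h2]
    simp [sub_self]
  -- g is C²
  have hgC2 : ContDiff ℝ 2 g := by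
    have hgfun : g = fun w => ∑ j, (f j ((WithLp.equiv 2 _).symm (w.ofLp.1 j, w.ofLp.2 j))
          + ∑ i, W j i * ‖w.ofLp.1 j - w.ofLp.1 i‖ ^ 2) := funext hg
    rw [hgfun]
    apply ContDiff.sum
    intro j _
    apply ContDiff.add
    · -- f j ∘ linear projection
      let Pm : WithLp 2 ((PiLp 2 fun _ : Fin J => EuclideanSpace ℝ (Fin n)) ×
            (PiLp 2 fun j : Fin J => EuclideanSpace ℝ (Fin (m j)))) →ₗ[ℝ]
          WithLp 2 (EuclideanSpace ℝ (Fin n) × EuclideanSpace ℝ (Fin (m j))) :=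
        { toFun := fun w => (WithLp.equiv 2 _).symm (w.ofLp.1 j, w.ofLp.2 j)
          map_add' := fun a b => rfl
          map_smul' := fun c a => rfl }
      exact (hf j).comp (LinearMap.toContinuousLinearMap Pm).contDiff
    · apply ContDiff.sum
      intro i _
      refine contDiff_const.mul ?_
      let Dm : WithLp 2 ((PiLp 2 fun _ : Fin J => EuclideanSpace ℝ (Fin n)) ×
            (PiLp 2 fun j : Fin J => EuclideanSpace ℝ (Fin (m j)))) →ₗ[ℝ]
          EuclideanSpace ℝ (Fin n) :=
        { toFun := fun w => w.ofLp.1 j - w.ofLp.1 i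
          map_add' := fun a b => by
            show (a.ofLp.1 + b.ofLp.1) j - (a.ofLp.1 + b.ofLp.1) i = (a.ofLp.1 j - a.ofLp.1 i) + (b.ofLp.1 j - b.ofLp.1 i)
            show (a.ofLp.1 j + b.ofLp.1 j) - (a.ofLp.1 i + b.ofLp.1 i) = _
            abel
          map_smul' := fun c a => by
            show (c • a.ofLp.1) j - (c • a.ofLp.1) i = c • (a.ofLp.1 j - a.ofLp.1 i)
            show c • a.ofLp.1 j - c • a.ofLp.1 i = _
            rw [smul_sub] }
      exact ContDiff.norm_sq ℝ (LinearMap.toContinuousLinearMap Dm).contDiff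
  have hgd : Differentiable ℝ g := hgC2.differentiable (by norm_num)
  have hg1 : ContDiff ℝ 1 (fderiv ℝ g) := hgC2.fderiv_right (by norm_num)
  have hg'd : Differentiable ℝ (fderiv ℝ g) := hg1.differentiable one_ne_zero
  -- first derivative of F
  have hdF : fderiv ℝ F = fun p => ((fderiv ℝ g) (L p)).comp L := by
    funext p
    rw [hFgL]
    have h := fderiv_comp p (hgd (L p)) L.differentiableAt
    rw [L.fderiv] at h
    exact h
  -- second derivative of F
  let Φ := (ContinuousLinearMap.compL ℝ
      (WithLp 2 (EuclideanSpace ℝ (Fin n) ×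
          (PiLp 2 fun j : Fin J => EuclideanSpace ℝ (Fin (m j)))))
      (WithLp 2 ((PiLp 2 fun _ : Fin J => EuclideanSpace ℝ (Fin n)) ×
          (PiLp 2 fun j : Fin J => EuclideanSpace ℝ (Fin (m j))))) ℝ).flip L
  have hdF' : fderiv ℝ F = (Φ ∘ fderiv ℝ g) ∘ (L : _ → _) := by
    rw [hdF]; rfl
  have hLp0 : L ((WithLp.equiv 2 _).symm (x, z.ofLp.2)) = z := by
    have h1 : WithLp.toLp 2 (fun _ : Fin J => x) = z.ofLp.1 := PiLp.ext fun j => (hcons j).symm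
    show WithLp.toLp 2 (WithLp.toLp 2 (fun _ => x), z.ofLp.2) = z
    rw [h1]
  have hddF : fderiv ℝ (fderiv ℝ F) ((WithLp.equiv 2 _).symm (x, z.ofLp.2))
      = Φ.comp ((fderiv ℝ (fderiv ℝ g) z).comp L) := by
    rw [hdF']
    set p0 := (WithLp.equiv 2 _).symm (x, z.ofLp.2)
    have h1 : fderiv ℝ (fderiv ℝ g ∘ (L : _ → _)) p0
        = (fderiv ℝ (fderiv ℝ g) z).comp L := by
      have h := fderiv_comp p0 (hg'd (L p0)) L.differentiableAt
      rw [L.fderiv, hLp0] at h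
      exact h
    have h2 := fderiv_comp p0 (Φ.differentiableAt)
      ((hg'd (L p0)).comp p0 L.differentiableAt)
    rw [Φ.fderiv] at h2
    have h3 : (⇑Φ ∘ fderiv ℝ g) ∘ ⇑L = ⇑Φ ∘ (fderiv ℝ g ∘ ⇑L) := rfl
    rw [h3, h2, h1]
  obtain ⟨q, hq⟩ := hFsaddle
  refine ⟨L q, ?_⟩
  have heq : fderiv ℝ (fderiv ℝ F) ((WithLp.equiv 2 _).symm (x, z.ofLp.2)) q q
      = fderiv ℝ (fderiv ℝ g) z (L q) (L q) := by
    rw [hddF]; rfl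
  rwa [heq] at hq
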